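/- Set θ' = 5(3 + 2√2) and μ_n = 2θ'·4^{−(n+1)} for n ∈ ℕ with n ≥ 1, and let (X_{μ_n}, Y_{μ_n}) be the unique solutions of μ_n X + B₁(X,Y) = 0, μ_n Y + B₂(X,Y) = 0. Then liminf_{n→∞} X_{μ_n} > 1/√2 and liminf_{n→∞} Y_{μ_n} > −1/√2. -/

import Mathlib

open Real Filter Topology

/-- The 2×2 matrix C(α,β) from the paper. -/
noncomputable def Cmat (a b : ℝ) : Matrix (Fin 2) (Fin 2) ℝ :=
  1 + b • !![-a, -1 + a; -1 + a, -a] + (1 - b) • !![-1 + a, -a; -a, -1 + a]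

/-- The running costs L₁, L₂. -/
noncomputable def Lfun (i : Fin 2) (a b : ℝ) : ℝ :=
  if i = 0 then a * b + 2 * (1 - a) * (1 - b) else -(a * b) - 2 * (1 - a) * (1 - b)

/-- b_i(α,β,u₁,u₂) = c_{i1}(α,β)u₁ + c_{i2}(α,β)u₂ − L_i(α,β). -/
noncomputable def bfun (i : Fin 2) (a b u₁ u₂ : ℝ) : ℝ :=
  Cmat a b i 0 * u₁ + Cmat a b i 1 * u₂ - Lfun i a b

/-- A_i(u₁,u₂) = max_{α∈𝒜} min_{β∈ℬ} b_i(α,β,u₁,u₂). -/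
noncomputable def Afun (As Bs : Set ℝ) (i : Fin 2) (u₁ u₂ : ℝ) : ℝ :=
  sSup ((fun a => sInf ((fun b => bfun i a b u₁ u₂) '' Bs)) '' As)

/-- The set 𝒜 = {2 − √2 + 4^{−k} : k ≥ 1} ∪ {2 − √2}. -/
noncomputable def calA : Set ℝ :=
  {x | ∃ k : ℕ, 1 ≤ k ∧ x = 2 - Real.sqrt 2 + (4 : ℝ) ^ (-(k : ℤ))} ∪ {2 - Real.sqrt 2}

/-- The set ℬ = {0, 1}. -/
def calB : Set ℝ := {0, 1}

/-- B_i(u₁,u₂) = max_{α∈𝒜} min_{β∈ℬ} b_i(α,β,u₁,u₂). -/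
noncomputable def Bop (i : Fin 2) (u₁ u₂ : ℝ) : ℝ := Afun calA calB i u₁ u₂

noncomputable def p0 (a s : ℝ) : ℝ := min (a*s - 2*(1-a)) ((1-a)*s - a)
noncomputable def p1 (a s : ℝ) : ℝ := min (2*(1-a) - a*s) (a - (1-a)*s)

lemma sqrt2_sq : Real.sqrt 2 ^ 2 = 2 := Real.sq_sqrt (by norm_num)
lemma sqrt2_lb : 1.414 ≤ Real.sqrt 2 := by
  nlinarith [sqrt2_sq, Real.sqrt_nonneg 2]
lemma sqrt2_ub : Real.sqrt 2 ≤ 1.4143 := by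
  nlinarith [sqrt2_sq, Real.sqrt_nonneg 2]

lemma bfun00 (a u₁ u₂ : ℝ) : bfun 0 a 0 u₁ u₂ = a*(u₁-u₂) - 2*(1-a) := by
  simp [bfun, Cmat, Lfun, Matrix.add_apply, Matrix.one_apply]; ring
lemma bfun01 (a u₁ u₂ : ℝ) : bfun 0 a 1 u₁ u₂ = (1-a)*(u₁-u₂) - a := by
  simp [bfun, Cmat, Lfun, Matrix.add_apply, Matrix.one_apply]; ring
lemma bfun10 (a u₁ u₂ : ℝ) : bfun 1 a 0 u₁ u₂ = 2*(1-a) - a*(u₁-u₂) := by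
  simp [bfun, Cmat, Lfun, Matrix.add_apply, Matrix.one_apply]; ring
lemma bfun11 (a u₁ u₂ : ℝ) : bfun 1 a 1 u₁ u₂ = a - (1-a)*(u₁-u₂) := by
  simp [bfun, Cmat, Lfun, Matrix.add_apply, Matrix.one_apply]; ring

lemma inner_inf (i : Fin 2) (a u₁ u₂ : ℝ) :
    sInf ((fun b => bfun i a b u₁ u₂) '' calB)
      = min (bfun i a 0 u₁ u₂) (bfun i a 1 u₁ u₂) := by
  rw [show calB = {(0:ℝ), 1} from rfl, Set.image_insert_eq, Set.image_singleton, csInf_pair]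

lemma Bop0_eq (u₁ u₂ : ℝ) : Bop 0 u₁ u₂ = sSup ((fun a => p0 a (u₁-u₂)) '' calA) := by
  unfold Bop Afun
  congr 1
  apply Set.image_congr
  intro a _
  rw [inner_inf, bfun00, bfun01, p0]
lemma Bop1_eq (u₁ u₂ : ℝ) : Bop 1 u₁ u₂ = sSup ((fun a => p1 a (u₁-u₂)) '' calA) := by
  unfold Bop Afun
  congr 1
  apply Set.image_congr
  intro a _
  rw [inner_inf, bfun10, bfun11, p1]

lemma calA_cases (n : ℕ) (hn : 1 ≤ n) {a : ℝ} (ha : a ∈ calA) :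
    (2 - Real.sqrt 2 ≤ a ∧ a ≤ 2 - Real.sqrt 2 + 4⁻¹) ∧
      (a ≤ 2 - Real.sqrt 2 + (4:ℝ)^(-((n:ℤ)+1)) ∨
        2 - Real.sqrt 2 + 4*(4:ℝ)^(-((n:ℤ)+1)) ≤ a) := by
  have h4 : (0:ℝ) < 4 := by norm_num
  have hmn : (0:ℝ) < (4:ℝ)^(-((n:ℤ)+1)) := zpow_pos h4 _
  rcases ha with ⟨k, hk, rfl⟩ | ha
  · have hkpos : (0:ℝ) < (4:ℝ)^(-(k:ℤ)) := zpow_pos h4 _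
    have hk4 : (4:ℝ)^(-(k:ℤ)) ≤ 4⁻¹ := by
      have : (4:ℝ)^(-(k:ℤ)) ≤ (4:ℝ)^(-(1:ℤ)) :=
        zpow_le_zpow_right₀ (by norm_num) (by omega)
      simpa using this
    refine ⟨⟨by linarith, by linarith⟩, ?_⟩
    rcases le_or_gt k n with h | h
    · right
      have : (4:ℝ)^(-(n:ℤ)) ≤ (4:ℝ)^(-(k:ℤ)) :=
        zpow_le_zpow_right₀ (by norm_num) (by omega)
      have h4n : (4:ℝ) * (4:ℝ)^(-((n:ℤ)+1)) = (4:ℝ)^(-(n:ℤ)) := by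
        rw [show -((n:ℤ)+1) = -(n:ℤ) + (-1) by ring, zpow_add₀ (by norm_num : (4:ℝ) ≠ 0)]
        simp; ring
      rw [h4n]; linarith
    · left
      have : (4:ℝ)^(-(k:ℤ)) ≤ (4:ℝ)^(-((n:ℤ)+1)) :=
        zpow_le_zpow_right₀ (by norm_num) (by omega)
      linarith
  · rw [Set.mem_singleton_iff] at ha
    subst ha
    exact ⟨⟨le_refl _, by linarith [zpow_pos h4 (-(1:ℤ)) ]⟩, Or.inl (by linarith)⟩

lemma mem_calA_low (n : ℕ) : 2 - Real.sqrt 2 + (4:ℝ)^(-((n:ℤ)+1)) ∈ calA := by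
  left
  exact ⟨n+1, by omega, by push_cast; ring_nf⟩

lemma mem_calA_high (n : ℕ) (hn : 1 ≤ n) :
    2 - Real.sqrt 2 + 4*(4:ℝ)^(-((n:ℤ)+1)) ∈ calA := by
  left
  refine ⟨n, hn, ?_⟩
  have h4n : (4:ℝ) * (4:ℝ)^(-((n:ℤ)+1)) = (4:ℝ)^(-(n:ℤ)) := by
    rw [show -((n:ℤ)+1) = -(n:ℤ) + (-1) by ring, zpow_add₀ (by norm_num : (4:ℝ) ≠ 0)]
    simp; ring
  rw [h4n]

lemma p0_le_abs {a s : ℝ} (h0 : 0 ≤ a) (h1 : a ≤ 1) : p0 a s ≤ |s| := by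
  have h2 : a*s ≤ |s| := by
    nlinarith [le_abs_self s, abs_nonneg s,
      mul_nonneg h0 (sub_nonneg.mpr (le_abs_self s)),
      mul_nonneg (sub_nonneg.mpr h1) (abs_nonneg s)]
  calc p0 a s ≤ a*s - 2*(1-a) := min_le_left _ _
    _ ≤ |s| := by nlinarith

lemma p1_le_abs {a s : ℝ} (h0 : 0 ≤ a) (h1 : a ≤ 1) : p1 a s ≤ |s| + 2 := by
  have h2 : -(a*s) ≤ |s| := by
    nlinarith [neg_abs_le s, abs_nonneg s,
      mul_nonneg h0 (sub_nonneg.mpr (neg_abs_le s)),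
      mul_nonneg (sub_nonneg.mpr h1) (abs_nonneg s)]
  calc p1 a s ≤ 2*(1-a) - a*s := min_le_left _ _
    _ ≤ |s| + 2 := by nlinarith

set_option maxHeartbeats 3000000 in
lemma key (X Y : ℝ → ℝ)
    (hsol : ∀ lam : ℝ, 0 < lam →
      lam * X lam + Bop 0 (X lam) (Y lam) = 0 ∧
      lam * Y lam + Bop 1 (X lam) (Y lam) = 0)
    (n : ℕ) (hn : 10 ≤ n) :
    3/4 ≤ X (2*(5*(3+2*Real.sqrt 2))*(4:ℝ)^(-((n:ℤ)+1))) ∧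
    X (2*(5*(3+2*Real.sqrt 2))*(4:ℝ)^(-((n:ℤ)+1))) ≤ 1 ∧
    -(2/3) ≤ Y (2*(5*(3+2*Real.sqrt 2))*(4:ℝ)^(-((n:ℤ)+1))) ∧
    Y (2*(5*(3+2*Real.sqrt 2))*(4:ℝ)^(-((n:ℤ)+1))) ≤ 1 := by
  have hr2 : Real.sqrt 2 ^ 2 = 2 := sqrt2_sq
  have hrl : 1.414 ≤ Real.sqrt 2 := sqrt2_lb
  have hru : Real.sqrt 2 ≤ 1.4143 := sqrt2_ub
  set r : ℝ := Real.sqrt 2 with hrdef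
  set m : ℝ := (4:ℝ)^(-((n:ℤ)+1)) with hmdef
  have hm : 0 < m := zpow_pos (by norm_num) _
  have hM : m ≤ 1/4194304 := by
    have h1 : m ≤ (4:ℝ)^(-(11:ℤ)) :=
      zpow_le_zpow_right₀ (by norm_num) (by omega)
    norm_num at h1
    linarith
  set lam : ℝ := 2*(5*(3+2*r))*m with hldef
  have hlam : 0 < lam := by
    have : (0:ℝ) < 3 + 2*r := by linarith
    positivity
  obtain ⟨h1, h2⟩ := hsol lam hlam
  set x := X lam with hxdef
  set y := Y lam with hydef
  set s : ℝ := x - y with hsdef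
  set aL : ℝ := 2 - r + m with haLdef
  set aH : ℝ := 2 - r + 4*m with haHdef
  have hmemL : aL ∈ calA := by
    have := mem_calA_low n; rw [← hmdef] at this; exact this
  have hmemH : aH ∈ calA := by
    have := mem_calA_high n (by omega); rw [← hmdef] at this; exact this
  have hB0 : Bop 0 x y = sSup ((fun a => p0 a s) '' calA) := Bop0_eq x y
  have hB1 : Bop 1 x y = sSup ((fun a => p1 a s) '' calA) := Bop1_eq x y

  have hcases : ∀ a ∈ calA, (2 - r ≤ a ∧ a ≤ 2 - r + 4⁻¹) ∧ (a ≤ aL ∨ aL + 3*m ≤ a) := by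
    intro a ha
    have h := calA_cases n (by omega) ha
    rw [← hmdef, ← hrdef] at h
    refine ⟨h.1, ?_⟩
    rcases h.2 with h | h
    · exact Or.inl h
    · right; rw [haLdef]; linarith
  clear_value s
  clear_value x y
  clear_value aL aH
  clear_value lam
  clear_value m
  clear_value r
  clear hmdef hrdef hxdef hydef hsol
  have hne0 : ((fun a => p0 a s) '' calA).Nonempty := ⟨_, Set.mem_image_of_mem _ hmemL⟩
  have hne1 : ((fun a => p1 a s) '' calA).Nonempty := ⟨_, Set.mem_image_of_mem _ hmemL⟩
  have bdd0 : BddAbove ((fun a => p0 a s) '' calA) := by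
    refine ⟨|s|, ?_⟩
    rintro _ ⟨a, ha, rfl⟩
    obtain ⟨⟨ha1, ha2⟩, _⟩ := hcases a ha
    exact p0_le_abs (by linarith) (by linarith)
  have bdd1 : BddAbove ((fun a => p1 a s) '' calA) := by
    refine ⟨|s| + 2, ?_⟩
    rintro _ ⟨a, ha, rfl⟩
    obtain ⟨⟨ha1, ha2⟩, _⟩ := hcases a ha
    exact p1_le_abs (by linarith) (by linarith)
  have hB0_ge : p0 aH s ≤ Bop 0 x y := by
    rw [hB0]; exact le_csSup bdd0 (Set.mem_image_of_mem _ hmemH)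
  have hB1_ge : p1 aL s ≤ Bop 1 x y := by
    rw [hB1]; exact le_csSup bdd1 (Set.mem_image_of_mem _ hmemL)
  have hB0_ub : -1 ≤ s → Bop 0 x y ≤ max (aL*s - 2*(1-aL)) ((1-aH)*s - aH) := by
    intro hs
    rw [hB0]
    apply csSup_le hne0
    rintro _ ⟨a, ha, rfl⟩
    obtain ⟨⟨ha1, ha2⟩, hc⟩ := hcases a ha
    rcases hc with hc | hc
    · refine le_max_of_le_left ?_
      calc p0 a s ≤ a*s - 2*(1-a) := min_le_left _ _
        _ ≤ aL*s - 2*(1-aL) := by nlinarith [mul_nonneg (sub_nonneg.mpr hc) (by linarith : (0:ℝ) ≤ s + 2)]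
    · refine le_max_of_le_right ?_
      calc p0 a s ≤ (1-a)*s - a := min_le_right _ _
        _ ≤ (1-aH)*s - aH := by nlinarith [mul_nonneg (by linarith : (0:ℝ) ≤ a - aH) (by linarith : (0:ℝ) ≤ s + 1)]
  have hB1_ub : -1 ≤ s → Bop 1 x y ≤ max (aL - (1-aL)*s) (2*(1-aH) - aH*s) := by
    intro hs
    rw [hB1]
    apply csSup_le hne1
    rintro _ ⟨a, ha, rfl⟩
    obtain ⟨⟨ha1, ha2⟩, hc⟩ := hcases a ha
    rcases hc with hc | hc
    · refine le_max_of_le_left ?_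
      calc p1 a s ≤ a - (1-a)*s := min_le_right _ _
        _ ≤ aL - (1-aL)*s := by nlinarith [mul_nonneg (sub_nonneg.mpr hc) (by linarith : (0:ℝ) ≤ s + 1)]
    · refine le_max_of_le_right ?_
      calc p1 a s ≤ 2*(1-a) - a*s := min_le_left _ _
        _ ≤ 2*(1-aH) - aH*s := by nlinarith [mul_nonneg (by linarith : (0:ℝ) ≤ a - aH) (by linarith : (0:ℝ) ≤ s + 2)]
  have hB0_ub_neg : s ≤ -1 → Bop 0 x y ≤ s - (9/4 - r)*(s+1) := by
    intro hs
    rw [hB0]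
    apply csSup_le hne0
    rintro _ ⟨a, ha, rfl⟩
    obtain ⟨⟨ha1, ha2⟩, _⟩ := hcases a ha
    calc p0 a s ≤ (1-a)*s - a := min_le_right _ _
      _ ≤ s - (9/4 - r)*(s+1) := by
          nlinarith [mul_nonneg (by linarith : (0:ℝ) ≤ 9/4 - r - a) (by linarith : (0:ℝ) ≤ -(s+1))]
  have hsum : lam * s = Bop 1 x y - Bop 0 x y := by
    have hx : lam * s = lam * x - lam * y := by rw [hsdef]; ring
    linarith [h1, h2]
  subst hldef haLdef haHdef
  have hp0eq : p0 (2 - r + 4*m) s = min ((2 - r + 4*m)*s - 2*(1-(2 - r + 4*m))) ((1-(2 - r + 4*m))*s - (2 - r + 4*m)) := rfl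
  have hp1eq : p1 (2 - r + m) s = min (2*(1-(2 - r + m)) - (2 - r + m)*s) ((2 - r + m) - (1-(2 - r + m))*s) := rfl
  have hs2 : s < r - 84*m := by
    by_contra hcon
    push_neg at hcon
    have ht : 0 ≤ s - (r - 84*m) := by linarith
    have hsm1 : -1 ≤ s := by linarith
    have hkey : (2*(5*(3+2*r))*m)*s + p0 (2 - r + 4*m) s ≤
        max ((2 - r + m) - (1-(2 - r + m))*s) (2*(1-(2 - r + 4*m)) - (2 - r + 4*m)*s) := by
      have h' := hB1_ub hsm1
      linarith [hB0_ge]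
    rw [hp0eq] at hkey
    rcases min_choice ((2 - r + 4*m)*s - 2*(1-(2 - r + 4*m))) ((1-(2 - r + 4*m))*s - (2 - r + 4*m)) with hmin | hmin <;>
      rw [hmin] at hkey <;>
      rcases le_max_iff.mp hkey with hk | hk <;>
      nlinarith [ht, hm.le, hM, hrl, hru, hr2,
        mul_nonneg ht hm.le, mul_nonneg ht (sub_nonneg.mpr hrl),
        mul_nonneg ht (sub_nonneg.mpr hru),
        mul_nonneg (mul_nonneg ht hm.le) (sub_nonneg.mpr hrl),
        mul_nonneg (mul_nonneg ht hm.le) (sub_nonneg.mpr hru),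
        mul_nonneg hm.le (sub_nonneg.mpr hM),
        mul_nonneg hm.le (sub_nonneg.mpr hrl),
        mul_nonneg hm.le (sub_nonneg.mpr hru)]
  have hs1 : r - 86*m < s := by
    by_contra hcon
    push_neg at hcon
    rcases le_or_gt (-1 : ℝ) s with hsm1 | hneg
    · have ht : 0 ≤ (r - 86*m) - s := by linarith
      have hkey : p1 (2 - r + m) s ≤ (2*(5*(3+2*r))*m)*s +
          max ((2 - r + m)*s - 2*(1-(2 - r + m))) ((1-(2 - r + 4*m))*s - (2 - r + 4*m)) := by
        have h' := hB0_ub hsm1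
        linarith [hB1_ge]
      rw [hp1eq] at hkey
      rcases min_choice (2*(1-(2 - r + m)) - (2 - r + m)*s) ((2 - r + m) - (1-(2 - r + m))*s) with hmin | hmin <;>
        rw [hmin] at hkey <;>
        rcases max_choice ((2 - r + m)*s - 2*(1-(2 - r + m))) ((1-(2 - r + 4*m))*s - (2 - r + 4*m)) with hmax | hmax <;>
        rw [hmax] at hkey <;>
        nlinarith [ht, hm.le, hM, hrl, hru, hr2,
          mul_nonneg ht hm.le, mul_nonneg ht (sub_nonneg.mpr hrl),
          mul_nonneg ht (sub_nonneg.mpr hru),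
          mul_nonneg (mul_nonneg ht hm.le) (sub_nonneg.mpr hrl),
          mul_nonneg (mul_nonneg ht hm.le) (sub_nonneg.mpr hru),
          mul_nonneg hm.le (sub_nonneg.mpr hM),
          mul_nonneg hm.le (sub_nonneg.mpr hrl),
          mul_nonneg hm.le (sub_nonneg.mpr hru)]
    · have ht : 0 ≤ -1 - s := by linarith
      have hkey : p1 (2 - r + m) s ≤ (2*(5*(3+2*r))*m)*s + (s - (9/4 - r)*(s+1)) := by
        have h' := hB0_ub_neg hneg.le
        linarith [hB1_ge]
      rw [hp1eq] at hkey
      rcases min_choice (2*(1-(2 - r + m)) - (2 - r + m)*s) ((2 - r + m) - (1-(2 - r + m))*s) with hmin | hmin <;>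
        rw [hmin] at hkey <;>
        nlinarith [ht, hm.le, hM, hrl, hru, hr2,
          mul_nonneg ht hm.le, mul_nonneg ht (sub_nonneg.mpr hrl),
          mul_nonneg ht (sub_nonneg.mpr hru),
          mul_nonneg ht (mul_nonneg hm.le (sub_nonneg.mpr hrl)),
          mul_nonneg hm.le (sub_nonneg.mpr hM),
          mul_nonneg hm.le (sub_nonneg.mpr hrl),
          mul_nonneg hm.le (sub_nonneg.mpr hru)]
  have hsm1 : -1 ≤ s := by linarith
  have ht1 : 0 ≤ s - (r - 86*m) := by linarith
  have ht2 : 0 ≤ (r - 84*m) - s := by linarith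
  have hints1 : (0:ℝ) ≤ m * (1/4194304 - m) := mul_nonneg hm.le (by linarith)
  have hints2 : (0:ℝ) ≤ m * (r - 1.414) := mul_nonneg hm.le (by linarith)
  have hints3 : (0:ℝ) ≤ m * (1.4143 - r) := mul_nonneg hm.le (by linarith)
  have hXlow : 3/4 ≤ x := by
    have hub := hB0_ub hsm1
    have hmaxle : max ((2 - r + m)*s - 2*(1-(2 - r + m))) ((1-(2 - r + 4*m))*s - (2 - r + 4*m)) ≤
        -(3/4*(2*(5*(3+2*r))*m)) := by
      apply max_le
      · nlinarith [ht2, hints1, hints2, hints3, hr2, hrl, hru, hm.le, hM,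
          mul_nonneg ht2 hm.le, mul_nonneg ht2 (sub_nonneg.mpr hrl), mul_nonneg ht2 (sub_nonneg.mpr hru)]
      · nlinarith [ht2, hints1, hints2, hints3, hr2, hrl, hru, hm.le, hM,
          mul_nonneg ht2 hm.le, mul_nonneg ht2 (sub_nonneg.mpr hrl), mul_nonneg ht2 (sub_nonneg.mpr hru)]
    have hx34 : (2*(5*(3+2*r))*m) * (3/4) ≤ (2*(5*(3+2*r))*m) * x := by linarith
    exact (mul_le_mul_iff_right₀ hlam).mp hx34
  have hXhigh : x ≤ 1 := by
    have hge := hB0_ge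
    rw [hp0eq] at hge
    have hx1 : (2*(5*(3+2*r))*m) * x ≤ (2*(5*(3+2*r))*m) * 1 := by
      rcases min_choice ((2 - r + 4*m)*s - 2*(1-(2 - r + 4*m))) ((1-(2 - r + 4*m))*s - (2 - r + 4*m)) with hmin | hmin <;>
        rw [hmin] at hge <;>
        nlinarith [ht1, hints1, hints2, hints3, hr2, hrl, hru, hm.le, hM,
          mul_nonneg ht1 hm.le, mul_nonneg ht1 (sub_nonneg.mpr hrl), mul_nonneg ht1 (sub_nonneg.mpr hru)]
    exact (mul_le_mul_iff_right₀ hlam).mp hx1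
  have hYlow : -(2/3) ≤ y := by
    have hub := hB1_ub hsm1
    have hmaxle : max ((2 - r + m) - (1-(2 - r + m))*s) (2*(1-(2 - r + 4*m)) - (2 - r + 4*m)*s) ≤
        (2/3)*(2*(5*(3+2*r))*m) := by
      apply max_le
      · nlinarith [ht1, hints1, hints2, hints3, hr2, hrl, hru, hm.le, hM,
          mul_nonneg ht1 hm.le, mul_nonneg ht1 (sub_nonneg.mpr hrl), mul_nonneg ht1 (sub_nonneg.mpr hru)]
      · nlinarith [ht1, hints1, hints2, hints3, hr2, hrl, hru, hm.le, hM,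
          mul_nonneg ht1 hm.le, mul_nonneg ht1 (sub_nonneg.mpr hrl), mul_nonneg ht1 (sub_nonneg.mpr hru)]
    have hy23 : (2*(5*(3+2*r))*m) * (-(2/3)) ≤ (2*(5*(3+2*r))*m) * y := by linarith
    exact (mul_le_mul_iff_right₀ hlam).mp hy23
  have hYhigh : y ≤ 1 := by
    have hge := hB1_ge
    rw [hp1eq] at hge
    have hy1 : (2*(5*(3+2*r))*m) * y ≤ (2*(5*(3+2*r))*m) * 1 := by
      rcases min_choice (2*(1-(2 - r + m)) - (2 - r + m)*s) ((2 - r + m) - (1-(2 - r + m))*s) with hmin | hmin <;>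
        rw [hmin] at hge <;>
        nlinarith [ht2, hints1, hints2, hints3, hr2, hrl, hru, hm.le, hM,
          mul_nonneg ht2 hm.le, mul_nonneg ht2 (sub_nonneg.mpr hrl), mul_nonneg ht2 (sub_nonneg.mpr hru)]
    exact (mul_le_mul_iff_right₀ hlam).mp hy1
  exact ⟨hXlow, hXhigh, hYlow, hYhigh⟩

theorem liminf_along_mu_n (X Y : ℝ → ℝ)
    (hsol : ∀ lam : ℝ, 0 < lam →
      lam * X lam + Bop 0 (X lam) (Y lam) = 0 ∧
      lam * Y lam + Bop 1 (X lam) (Y lam) = 0) :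
    1 / Real.sqrt 2 <
      Filter.liminf (fun n : ℕ =>
        X (2 * (5 * (3 + 2 * Real.sqrt 2)) * (4 : ℝ) ^ (-((n : ℤ) + 1)))) Filter.atTop ∧
    -(1 / Real.sqrt 2) <
      Filter.liminf (fun n : ℕ =>
        Y (2 * (5 * (3 + 2 * Real.sqrt 2)) * (4 : ℝ) ^ (-((n : ℤ) + 1)))) Filter.atTop := by
  have hkey := key X Y hsol
  constructor
  · set u : ℕ → ℝ := fun n : ℕ =>
      X (2 * (5 * (3 + 2 * Real.sqrt 2)) * (4 : ℝ) ^ (-((n : ℤ) + 1))) with hu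
    have hev : ∀ᶠ n : ℕ in atTop, 3/4 ≤ u n ∧ u n ≤ 1 := by
      filter_upwards [eventually_ge_atTop 10] with n hn
      exact ⟨(hkey n hn).1, (hkey n hn).2.1⟩
    have hcb : IsCoboundedUnder (· ≥ ·) atTop u :=
      isCoboundedUnder_ge_of_eventually_le atTop (x := 1) (hev.mono fun n h => h.2)
    have hle : 3/4 ≤ liminf u atTop :=
      le_liminf_of_le hcb (hev.mono fun n h => h.1)
    have hlt : 1/Real.sqrt 2 < 3/4 := by
      rw [div_lt_iff₀ (by positivity : (0:ℝ) < Real.sqrt 2)]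
      nlinarith [sqrt2_lb]
    linarith
  · set u : ℕ → ℝ := fun n : ℕ =>
      Y (2 * (5 * (3 + 2 * Real.sqrt 2)) * (4 : ℝ) ^ (-((n : ℤ) + 1))) with hu
    have hev : ∀ᶠ n : ℕ in atTop, -(2/3) ≤ u n ∧ u n ≤ 1 := by
      filter_upwards [eventually_ge_atTop 10] with n hn
      exact ⟨(hkey n hn).2.2.1, (hkey n hn).2.2.2⟩
    have hcb : IsCoboundedUnder (· ≥ ·) atTop u :=
      isCoboundedUnder_ge_of_eventually_le atTop (x := 1) (hev.mono fun n h => h.2)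
    have hle : -(2/3) ≤ liminf u atTop :=
      le_liminf_of_le hcb (hev.mono fun n h => h.1)
    have hlt : -(1/Real.sqrt 2) < -(2/3) := by
      rw [neg_lt_neg_iff, lt_div_iff₀ (by positivity : (0:ℝ) < Real.sqrt 2)]
      nlinarith [sqrt2_ub]
    linarith
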